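/- arXiv:0812.2867 — 3 statements merged into one kernel-verified Lean document; each statement's English description precedes it below -/
import Mathlib

section
/- Define sets S_m ⊆ ℝ recursively by A_0^{(m)} = {m/(m-1)}, A_{k+1}^{(m)} = {z ∈ ℝ : 2mz - m(m-1)z² ∈ A_k^{(m)}}, and S_m = {0} ∪ ⋃_{k≥0} A_k^{(m)}. Then S_m ⊆ [0, 2/(m-1)) ∪ {m/(m-1)} for every m ≥ 3. -/
theorem stmt_16 (m : ℕ) (hm : 3 ≤ m) (A : ℕ → Set ℝ) (S : Set ℝ)
    (hA0 : A 0 = {(m : ℝ)/((m : ℝ) - 1)})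
    (hAk : ∀ k : ℕ, A (k + 1) = {z : ℝ | 2 * m * z - m * ((m : ℝ) - 1) * z ^ 2 ∈ A k})
    (hS : S = {0} ∪ ⋃ k : ℕ, A k) :
    S ⊆ Set.Ico 0 (2/((m : ℝ) - 1)) ∪ {(m : ℝ)/((m : ℝ) - 1)} := by
  have hm3 : (3:ℝ) ≤ (m:ℝ) := by exact_mod_cast hm
  have hc : (0:ℝ) < (m:ℝ) - 1 := by linarith
  have hmpos : (0:ℝ) < (m:ℝ) := by linarith
  have key : ∀ k, ∀ z ∈ A k, (0 < z ∧ z < 2/((m:ℝ)-1)) ∨ z = (m:ℝ)/((m:ℝ)-1) := by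
    intro k
    induction k with
    | zero => intro z hz; rw [hA0] at hz; right; exact hz
    | succ n ih =>
      intro z hz
      rw [hAk n] at hz
      have h := ih _ hz
      have hRpos : 0 < 2 * (m:ℝ) * z - m * ((m:ℝ) - 1) * z ^ 2 := by
        rcases h with ⟨h1, h2⟩ | h1
        · exact h1
        · rw [h1]; exact div_pos hmpos hc
      have hzpos : 0 < z := by
        by_contra hle
        push_neg at hle
        have h1 : 2 * (m:ℝ) * z ≤ 0 := mul_nonpos_of_nonneg_of_nonpos (by linarith) hle
        have h2 : 0 ≤ (m:ℝ) * ((m:ℝ) - 1) * z ^ 2 := by positivity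
        linarith
      left
      refine ⟨hzpos, ?_⟩
      rw [lt_div_iff₀ hc]
      nlinarith
  rw [hS]
  rintro x (hx | hx)
  · left
    simp only [Set.mem_singleton_iff] at hx
    subst hx
    exact ⟨le_refl 0, div_pos two_pos hc⟩
  · simp only [Set.mem_iUnion] at hx
    obtain ⟨k, hk⟩ := hx
    rcases key k x hk with ⟨h1, h2⟩ | h1
    · left; exact ⟨le_of_lt h1, h2⟩
    · right; exact h1
end

section
/- With S_m = {0} ∪ ⋃_{k≥0} R_m^{-k}({m/(m-1)}) where R_m(z) = 2mz - m(m-1)z², the sets S_m converge to {0, 1} in the Hausdorff metric as m → ∞. -/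
private lemma aux_pos_step (m : ℝ) (hm : 2 ≤ m) (w : ℝ)
    (h : 0 < 2 * m * w - m * (m - 1) * w ^ 2) : 0 < w ∧ w ≤ 2 / (m - 1) := by
  have hm1 : 0 < m - 1 := by linarith
  have hw : 0 < w := by
    by_contra hw
    push_neg at hw
    nlinarith [mul_nonneg (mul_nonneg (by linarith : (0:ℝ) ≤ m) hm1.le) (sq_nonneg w),
      mul_nonpos_of_nonneg_of_nonpos (by linarith : (0:ℝ) ≤ 2 * m) hw]
  refine ⟨hw, ?_⟩
  rw [le_div_iff₀ hm1]
  nlinarith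

private lemma aux_iter (m : ℝ) (hm : 2 ≤ m) :
    ∀ k : ℕ, ∀ x : ℝ,
      0 < (fun w : ℝ => 2 * m * w - m * (m - 1) * w ^ 2)^[k + 1] x →
      0 < x ∧ x ≤ 2 / (m - 1) := by
  intro k
  induction k with
  | zero =>
    intro x hx
    simp only [zero_add, Function.iterate_one] at hx
    exact aux_pos_step m hm x hx
  | succ n ih =>
    intro x hx
    rw [Function.iterate_succ_apply] at hx
    have := ih _ hx
    exact aux_pos_step m hm x this.1

theorem stmt_17 :
    Filter.Tendsto
      (fun m : ℕ =>
        EMetric.hausdorffEdist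
          (({0} ∪ ⋃ k : ℕ,
            {z : ℝ | (fun w : ℝ => 2 * m * w - m * ((m : ℝ) - 1) * w ^ 2)^[k] z
              = (m : ℝ)/((m : ℝ) - 1)}) : Set ℝ)
          ({0, 1} : Set ℝ))
      Filter.atTop (nhds 0) := by
  have hupper : Filter.Tendsto (fun m : ℕ => ENNReal.ofReal (2 / ((m : ℝ) - 1)))
      Filter.atTop (nhds 0) := by
    have h1 : Filter.Tendsto (fun m : ℕ => (m : ℝ) - 1) Filter.atTop Filter.atTop :=
      Filter.tendsto_atTop_add_const_right _ (-1) tendsto_natCast_atTop_atTop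
    have h2 : Filter.Tendsto (fun m : ℕ => 2 / ((m : ℝ) - 1)) Filter.atTop (nhds 0) :=
      Filter.Tendsto.div_atTop tendsto_const_nhds h1
    have := (ENNReal.tendsto_ofReal h2)
    simpa using this
  apply tendsto_of_tendsto_of_tendsto_of_le_of_le' tendsto_const_nhds hupper
  · exact Filter.Eventually.of_forall fun m => zero_le
  · filter_upwards [Filter.eventually_ge_atTop 2] with m hm
    have hM : (2 : ℝ) ≤ (m : ℝ) := by exact_mod_cast hm
    set M : ℝ := (m : ℝ) with hMdef
    have hM1 : 0 < M - 1 := by linarith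
    have hbound : (0:ℝ) ≤ 2 / (M - 1) := by positivity
    apply EMetric.hausdorffEdist_le_of_mem_edist
    · intro x hx
      rcases hx with hx | hx
      · refine ⟨0, Or.inl rfl, ?_⟩
        simp [Set.mem_singleton_iff.mp hx]
      · rcases Set.mem_iUnion.mp hx with ⟨k, hk⟩
        simp only [Set.mem_setOf_eq] at hk
        match k with
        | 0 =>
          simp only [Function.iterate_zero, id_eq] at hk
          refine ⟨1, Or.inr rfl, ?_⟩
          rw [edist_dist, Real.dist_eq]
          apply ENNReal.ofReal_le_ofReal
          have : x - 1 = 1 / (M - 1) := by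
            rw [hk]; field_simp; ring
          rw [this, abs_of_nonneg (by positivity)]
          rw [div_le_div_iff₀ hM1 hM1]; linarith
        | k + 1 =>
          have hpos : 0 < (fun w : ℝ => 2 * M * w - M * (M - 1) * w ^ 2)^[k + 1] x := by
            rw [hk]; positivity
          obtain ⟨hx0, hx2⟩ := aux_iter M hM (k := k) x hpos
          refine ⟨0, Or.inl rfl, ?_⟩
          rw [edist_dist, Real.dist_eq]
          apply ENNReal.ofReal_le_ofReal
          rw [sub_zero, abs_of_nonneg hx0.le]
          exact hx2
    · intro y hy
      rcases hy with hy | hy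
      · refine ⟨0, Or.inl rfl, ?_⟩
        simp [Set.mem_singleton_iff.mp hy]
      · refine ⟨M / (M - 1), Or.inr ?_, ?_⟩
        · exact Set.mem_iUnion.mpr ⟨0, by simp⟩
        · rw [Set.mem_singleton_iff.mp hy, edist_dist, Real.dist_eq]
          apply ENNReal.ofReal_le_ofReal
          have : (1:ℝ) - M / (M - 1) = -(1 / (M - 1)) := by field_simp; ring
          rw [this, abs_neg, abs_of_nonneg (by positivity)]
          rw [div_le_div_iff₀ hM1 hM1]; linarith
end

section
/- For R(z) = 6z - 6z², the iterated preimage set ⋃_{k≥1} R^{-k}({3/2}) is contained in the open interval (0,1), and R^{-1}({3/2}) = {1/2}. -/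
lemma aux_neg (z : ℝ) (h : z ≤ 0 ∨ 1 ≤ z) : 6 * z - 6 * z ^ 2 ≤ 0 := by
  rcases h with h | h <;> nlinarith

theorem stmt_19 :
    (⋃ k : ℕ, ⋃ _ : 1 ≤ k,
        {z : ℝ | (fun w : ℝ => 6 * w - 6 * w ^ 2)^[k] z = 3/2}) ⊆ Set.Ioo 0 1 ∧
    {z : ℝ | 6 * z - 6 * z ^ 2 = 3/2} = {1/2} := by
  constructor
  · intro z hz
    simp only [Set.mem_iUnion, Set.mem_setOf_eq] at hz
    obtain ⟨k, hk, hiter⟩ := hz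
    by_contra hnot
    have hout : z ≤ 0 ∨ 1 ≤ z := by
      simp only [Set.mem_Ioo, not_and_or, not_lt] at hnot
      exact hnot
    have key : ∀ n, 1 ≤ n → (fun w : ℝ => 6 * w - 6 * w ^ 2)^[n] z ≤ 0 := by
      intro n hn
      induction n with
      | zero => omega
      | succ m ih =>
        rw [Function.iterate_succ_apply']
        rcases Nat.eq_or_lt_of_le hn with h | h
        · have : m = 0 := by omega
          subst this
          simpa using aux_neg z hout
        · have hm : 1 ≤ m := by omega
          exact aux_neg _ (Or.inl (ih hm))
    have := key k hk
    rw [hiter] at this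
    norm_num at this
  · ext z
    simp only [Set.mem_setOf_eq, Set.mem_singleton_iff]
    constructor
    · intro h; nlinarith [sq_nonneg (z - 1/2)]
    · intro h; subst h; norm_num
end
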